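/- arXiv:2605.10188 — 7 statements merged into one kernel-verified Lean document; each statement's English description precedes it below -/
import Mathlib

section
/- Let n be a finite index type, let T > 0, let x : ℝ → (n → ℝ) be continuously differentiable on [0,T], and let p be a multivariate polynomial over ℝ in the variables n. If p(x(0)) ≤ 0 and for every t ∈ [0,T] the chain-rule derivative ∑_{i ∈ n} (∂p/∂x_i)(x(t)) · x_i'(t) is ≤ 0, then p(x(T)) ≤ 0. -/
lemma eval_hasDerivWithinAt
    {n : Type*} [Fintype n] [DecidableEq n]
    (T : ℝ) (x : ℝ → n → ℝ)
    (hd : ∀ i, ∀ t ∈ Set.Icc (0:ℝ) T, HasDerivWithinAt (fun s => x s i)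
      (derivWithin (fun s => x s i) (Set.Icc 0 T) t) (Set.Icc 0 T) t)
    (p : MvPolynomial n ℝ) :
    ∀ t ∈ Set.Icc (0:ℝ) T, HasDerivWithinAt (fun s => MvPolynomial.eval (x s) p)
      (∑ i, MvPolynomial.eval (x t) (MvPolynomial.pderiv i p) *
        derivWithin (fun s => x s i) (Set.Icc 0 T) t) (Set.Icc 0 T) t := by
  induction p using MvPolynomial.induction_on with
  | C a =>
      intro t ht
      simp only [MvPolynomial.pderiv_C, map_zero, zero_mul, Finset.sum_const_zero,
        MvPolynomial.eval_C]
      exact hasDerivWithinAt_const t _ a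
  | add p q hp hq =>
      intro t ht
      simp only [MvPolynomial.eval_add, map_add, add_mul, Finset.sum_add_distrib]
      exact (hp t ht).add (hq t ht)
  | mul_X p i hp =>
      intro t ht
      have h := (hp t ht).mul (hd i t ht)
      have hsum : (∑ j, MvPolynomial.eval (x t) (MvPolynomial.pderiv j (p * MvPolynomial.X i)) *
            derivWithin (fun s => x s j) (Set.Icc 0 T) t)
          = (∑ j, MvPolynomial.eval (x t) (MvPolynomial.pderiv j p) *
              derivWithin (fun s => x s j) (Set.Icc 0 T) t) * x t i
            + MvPolynomial.eval (x t) p * derivWithin (fun s => x s i) (Set.Icc 0 T) t := by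
        rw [Finset.sum_mul]
        have : MvPolynomial.eval (x t) p * derivWithin (fun s => x s i) (Set.Icc 0 T) t
            = ∑ j, (if j = i then
                MvPolynomial.eval (x t) p * derivWithin (fun s => x s j) (Set.Icc 0 T) t else 0) := by
          rw [Finset.sum_ite_eq' Finset.univ i]
          simp
        rw [this, ← Finset.sum_add_distrib]
        apply Finset.sum_congr rfl
        intro j _
        simp only [MvPolynomial.pderiv_mul, MvPolynomial.pderiv_X, map_add, map_mul,
          MvPolynomial.eval_X, MvPolynomial.eval_C]
        by_cases hji : j = i <;> simp [hji, Pi.single_apply] <;> ring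
      simp only [MvPolynomial.eval_mul, MvPolynomial.eval_X]
      rw [hsum]
      exact h


/-- Soundness of the non-strict differential induction axiom (dI≤): if a
polynomial `p` is initially non-positive along a `C¹` trace `x` on `[0,T]` and
its chain-rule derivative is non-positive throughout, then `p(x T) ≤ 0`. -/
theorem dI_le_sound
    {n : Type*} [Fintype n] [DecidableEq n]
    (T : ℝ) (hT : 0 < T)
    (x : ℝ → n → ℝ) (hx : ContDiffOn ℝ 1 x (Set.Icc 0 T))
    (p : MvPolynomial n ℝ)
    (h0 : MvPolynomial.eval (x 0) p ≤ 0)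
    (hder : ∀ t ∈ Set.Icc 0 T,
      (∑ i, MvPolynomial.eval (x t) (MvPolynomial.pderiv i p) *
        derivWithin (fun s => x s i) (Set.Icc 0 T) t) ≤ 0) :
    MvPolynomial.eval (x T) p ≤ 0 := by
  have hdiff : DifferentiableOn ℝ x (Set.Icc 0 T) := hx.differentiableOn one_ne_zero
  have hd : ∀ i, ∀ t ∈ Set.Icc (0:ℝ) T, HasDerivWithinAt (fun s => x s i)
      (derivWithin (fun s => x s i) (Set.Icc 0 T) t) (Set.Icc 0 T) t := by
    intro i t ht
    exact (differentiableWithinAt_pi.mp (hdiff t ht) i).hasDerivWithinAt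
  have key := eval_hasDerivWithinAt T x hd p
  have hanti : AntitoneOn (fun s => MvPolynomial.eval (x s) p) (Set.Icc 0 T) := by
    apply antitoneOn_of_hasDerivWithinAt_nonpos (convex_Icc 0 T)
      (f' := fun t => ∑ i, MvPolynomial.eval (x t) (MvPolynomial.pderiv i p) *
        derivWithin (fun s => x s i) (Set.Icc 0 T) t)
    · intro t ht
      exact (key t ht).continuousWithinAt
    · intro t ht
      exact (key t (interior_subset ht)).mono interior_subset
    · intro t ht
      exact hder t (interior_subset ht)
  have := hanti (Set.left_mem_Icc.mpr hT.le) (Set.right_mem_Icc.mpr hT.le) hT.le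
  exact this.trans h0
end

section
/- Let n be a finite index type, let T > 0, let x : ℝ → (n → ℝ) be continuously differentiable on [0,T], and let p be a multivariate polynomial over ℝ in the variables n. If p(x(0)) < 0 and for every t ∈ [0,T] the chain-rule derivative ∑_{i ∈ n} (∂p/∂x_i)(x(t)) · x_i'(t) is ≤ 0, then p(x(T)) < 0. -/
open MvPolynomial Set

lemma dI_sum_eq {n : Type*} [Fintype n] [DecidableEq n] (v : n → ℝ) (d : n → ℝ)
    (p : MvPolynomial n ℝ) (i : n) :
    ∑ j, MvPolynomial.eval v (MvPolynomial.pderiv j (p * X i)) * d j =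
    (∑ j, MvPolynomial.eval v (MvPolynomial.pderiv j p) * d j) * v i +
      MvPolynomial.eval v p * d i := by
  have h1 : ∀ j : n, MvPolynomial.eval v (MvPolynomial.pderiv j (p * X i)) * d j =
      MvPolynomial.eval v (MvPolynomial.pderiv j p) * d j * v i +
        (if i = j then MvPolynomial.eval v p * d j else 0) := by
    intro j
    simp only [pderiv_mul, pderiv_X, map_add, map_mul, eval_X, Pi.single_apply, apply_ite,
      map_one, map_zero]
    split_ifs with h <;> ring
  rw [Finset.sum_congr rfl fun j _ => h1 j, Finset.sum_add_distrib, Finset.sum_ite_eq]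
  simp [Finset.sum_mul]

lemma dI_chain_key
    {n : Type*} [Fintype n] [DecidableEq n]
    (T : ℝ)
    (x : ℝ → n → ℝ)
    (hxi : ∀ i, ∀ t ∈ Set.Icc (0:ℝ) T, HasDerivWithinAt (fun s => x s i)
      (derivWithin (fun s => x s i) (Set.Icc 0 T) t) (Set.Icc 0 T) t)
    (p : MvPolynomial n ℝ) :
    ∀ t ∈ Set.Icc (0:ℝ) T, HasDerivWithinAt (fun s => MvPolynomial.eval (x s) p)
      (∑ i, MvPolynomial.eval (x t) (MvPolynomial.pderiv i p) *
        derivWithin (fun s => x s i) (Set.Icc 0 T) t) (Set.Icc 0 T) t := by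
  induction p using MvPolynomial.induction_on with
  | C a =>
    intro t ht
    simp only [eval_C, pderiv_C, map_zero, zero_mul, Finset.sum_const_zero]
    exact hasDerivWithinAt_const t _ a
  | add p q hp hq =>
    intro t ht
    simpa [map_add, add_mul, Finset.sum_add_distrib, Pi.add_def] using (hp t ht).add (hq t ht)
  | mul_X p i hp =>
    intro t ht
    have h := (hp t ht).mul (hxi i t ht)
    rw [dI_sum_eq]
    simpa [Pi.mul_def] using h

/-- Soundness of the strict differential induction axiom (dI<): if a
polynomial `p` is initially negative along a `C¹` trace `x` on `[0,T]` and
its chain-rule derivative is non-positive throughout, then `p(x T) < 0`. -/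
theorem dI_lt_sound
    {n : Type*} [Fintype n] [DecidableEq n]
    (T : ℝ) (hT : 0 < T)
    (x : ℝ → n → ℝ) (hx : ContDiffOn ℝ 1 x (Set.Icc 0 T))
    (p : MvPolynomial n ℝ)
    (h0 : MvPolynomial.eval (x 0) p < 0)
    (hder : ∀ t ∈ Set.Icc 0 T,
      (∑ i, MvPolynomial.eval (x t) (MvPolynomial.pderiv i p) *
        derivWithin (fun s => x s i) (Set.Icc 0 T) t) ≤ 0) :
    MvPolynomial.eval (x T) p < 0 := by
  have hxi : ∀ i, ∀ t ∈ Set.Icc (0:ℝ) T, HasDerivWithinAt (fun s => x s i)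
      (derivWithin (fun s => x s i) (Set.Icc 0 T) t) (Set.Icc 0 T) t := by
    intro i t ht
    exact ((differentiableWithinAt_pi.mp ((hx.differentiableOn one_ne_zero) t ht)) i).hasDerivWithinAt
  have key := dI_chain_key T x hxi p
  set f : ℝ → ℝ := fun s => MvPolynomial.eval (x s) p with hf
  have hmono : AntitoneOn f (Set.Icc 0 T) := by
    apply antitoneOn_of_hasDerivWithinAt_nonpos (convex_Icc 0 T)
      (f' := fun t => ∑ i, MvPolynomial.eval (x t) (MvPolynomial.pderiv i p) *
        derivWithin (fun s => x s i) (Set.Icc 0 T) t)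
    · intro t ht
      exact (key t ht).differentiableWithinAt.continuousWithinAt
    · intro t ht
      rw [interior_Icc] at ht ⊢
      exact (key t (Set.Ioo_subset_Icc_self ht)).mono Set.Ioo_subset_Icc_self
    · intro t ht
      rw [interior_Icc] at ht
      exact hder t (Set.Ioo_subset_Icc_self ht)
  have := hmono (Set.left_mem_Icc.2 hT.le) (Set.right_mem_Icc.2 hT.le) hT.le
  exact lt_of_le_of_lt this h0
end

section
/- Let n be a finite index type, let T > 0, let x : ℝ → (n → ℝ) be continuously differentiable on [0,T], and let p be a multivariate polynomial over ℝ in the variables n. If p(x(t)) = 0 for all t ∈ [0,T], then for all t ∈ [0,T] the chain-rule derivative vanishes: ∑_{i ∈ n} (∂p/∂x_i)(x(t)) · x_i'(t) = 0. -/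
lemma dHC_chain
    {n : Type*} [Fintype n] [DecidableEq n]
    (s : Set ℝ) (t : ℝ) (x : ℝ → n → ℝ) (x' : n → ℝ)
    (hx : ∀ i, HasDerivWithinAt (fun u => x u i) (x' i) s t)
    (p : MvPolynomial n ℝ) :
    HasDerivWithinAt (fun u => MvPolynomial.eval (x u) p)
      (∑ i, MvPolynomial.eval (x t) (MvPolynomial.pderiv i p) * x' i) s t := by
  induction p using MvPolynomial.induction_on with
  | C a => simpa using hasDerivWithinAt_const t s a
  | add p q hp hq =>
      refine ((hp.add hq).congr_deriv ?_).congr (fun u _ => ?_) ?_ <;>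
        simp [Finset.sum_add_distrib, add_mul]
  | mul_X p j hp =>
      have := hp.mul (hx j)
      refine (this.congr_deriv ?_).congr (fun u _ => by simp) (by simp)
      · simp [MvPolynomial.pderiv_mul, add_mul, Finset.sum_add_distrib,
          Finset.mul_sum, Finset.sum_mul, MvPolynomial.pderiv_X,
          Pi.single_apply, apply_ite (MvPolynomial.eval (x t)),
          mul_ite, ite_mul, Finset.sum_ite_eq']
        rw [add_comm]
        congr 1
        exact Finset.sum_congr rfl fun i _ => by ring
/-- Soundness of the differential hidden constraint axiom (dHC): if a
polynomial `p` vanishes identically along a `C¹` trace `x` on `[0,T]`, then its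
chain-rule (syntactic) differential vanishes along the trace as well. -/
theorem dHC_sound
    {n : Type*} [Fintype n] [DecidableEq n]
    (T : ℝ) (hT : 0 < T)
    (x : ℝ → n → ℝ) (hx : ContDiffOn ℝ 1 x (Set.Icc 0 T))
    (p : MvPolynomial n ℝ)
    (hzero : ∀ t ∈ Set.Icc 0 T, MvPolynomial.eval (x t) p = 0) :
    ∀ t ∈ Set.Icc 0 T,
      (∑ i, MvPolynomial.eval (x t) (MvPolynomial.pderiv i p) *
        derivWithin (fun s => x s i) (Set.Icc 0 T) t) = 0 := by
  intro t ht
  have hdiff : ∀ i, DifferentiableWithinAt ℝ (fun u => x u i) (Set.Icc 0 T) t := by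
    intro i
    exact (differentiableWithinAt_pi.mp (hx.differentiableOn one_ne_zero t ht)) i
  have hchain := dHC_chain (Set.Icc 0 T) t x
    (fun i => derivWithin (fun u => x u i) (Set.Icc 0 T) t)
    (fun i => (hdiff i).hasDerivWithinAt) p
  have hzero' : HasDerivWithinAt (fun u => MvPolynomial.eval (x u) p) 0 (Set.Icc 0 T) t :=
    (hasDerivWithinAt_const t _ (0:ℝ)).congr (fun y hy => (hzero y hy)) (hzero t ht)
  have hu := uniqueDiffOn_Icc hT t ht
  exact (hchain.derivWithin hu).symm.trans (hzero'.derivWithin hu)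
end

section
/- Let n be a finite index type, let T > 0, let A, B : ℝ → Matrix n n ℝ and c : ℝ → (n → ℝ) be continuous on [0,T], and assume det(A(t)) ≠ 0 for all t ∈ [0,T]. Then for every initial value z₀ : n → ℝ there exists a unique continuously differentiable function z : ℝ → (n → ℝ) on [0,T] with z(0) = z₀ satisfying the linear differential-algebraic equation A(t) · z'(t) = B(t) · z(t) + c(t) for all t ∈ [0,T]. -/
open Set

theorem ode_glue {E : Type*} [NormedAddCommGroup E] [NormedSpace ℝ E]
    (v : ℝ → E → E) (h : ℝ) (hh : 0 < h) (z₀ : E)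
    (step : ∀ (s : ℝ) (x₀ : E), ∃ f : ℝ → E, f s = x₀ ∧
      ∀ t ∈ Icc s (s + h), HasDerivWithinAt f (v t (f t)) (Icc s (s + h)) t) :
    ∀ k : ℕ, ∃ f : ℝ → E, f 0 = z₀ ∧
      ∀ t ∈ Icc 0 ((k + 1 : ℕ) * h), HasDerivWithinAt f (v t (f t)) (Icc 0 ((k + 1 : ℕ) * h)) t := by
  intro k
  induction k with
  | zero =>
    obtain ⟨f, hf0, hf⟩ := step 0 z₀
    refine ⟨f, hf0, ?_⟩
    simpa using hf
  | succ k ih =>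
    obtain ⟨f, hf0, hf⟩ := ih
    set s : ℝ := (k + 1 : ℕ) * h with hs
    obtain ⟨g, hg0, hg⟩ := step s (f s)
    have hs0 : (0 : ℝ) ≤ s := by positivity
    have hsh : s + h = ((k + 1 + 1 : ℕ) : ℝ) * h := by rw [hs]; push_cast; ring
    refine ⟨fun t => if t ≤ s then f t else g t, by simp [hs0.trans_eq rfl, hf0, show (0:ℝ) ≤ s from hs0], ?_⟩
    intro t ht
    rw [← hsh] at ht ⊢
    have hsplit : Icc (0 : ℝ) s ∪ Icc s (s + h) = Icc 0 (s + h) :=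
      Icc_union_Icc_eq_Icc hs0 (by linarith)
    have h1 : HasDerivWithinAt (fun t => if t ≤ s then f t else g t)
        (v t (if t ≤ s then f t else g t)) (Icc 0 s) t := by
      by_cases hts : t ∈ Icc (0:ℝ) s
      · have := hf t hts
        have he : ∀ u ∈ Icc (0:ℝ) s, (if u ≤ s then f u else g u) = f u := fun u hu => if_pos hu.2
        have het : (if t ≤ s then f t else g t) = f t := if_pos hts.2
        rw [het]
        exact this.congr he het
      · exact HasFDerivWithinAt.of_notMem_closure (by rwa [closure_Icc])
    have h2 : HasDerivWithinAt (fun t => if t ≤ s then f t else g t)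
        (v t (if t ≤ s then f t else g t)) (Icc s (s + h)) t := by
      by_cases hts : t ∈ Icc s (s + h)
      · have := hg t hts
        have he : ∀ u ∈ Icc s (s + h), (if u ≤ s then f u else g u) = g u := by
          intro u hu
          by_cases hus : u ≤ s
          · have : u = s := le_antisymm hus hu.1
            simp [this, hg0]
          · exact if_neg hus
        have het : (if t ≤ s then f t else g t) = g t := he t hts
        rw [het]
        exact this.congr he het
      · exact HasFDerivWithinAt.of_notMem_closure (by rwa [closure_Icc])
    exact hsplit ▸ h1.union h2

/-- A linear differential-algebraic equation `A(t) z'(t) = B(t) z(t) + c(t)`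
with continuous coefficients and pointwise invertible matrix `A(t)` admits,
for every initial value `z₀`, a unique `C¹` solution on `[0,T]`. -/
theorem linear_dae_existence_uniqueness
    {n : Type*} [Fintype n] [DecidableEq n]
    (T : ℝ) (hT : 0 < T)
    (A B : ℝ → Matrix n n ℝ) (c : ℝ → n → ℝ)
    (hA : ContinuousOn A (Set.Icc 0 T))
    (hB : ContinuousOn B (Set.Icc 0 T))
    (hc : ContinuousOn c (Set.Icc 0 T))
    (hdet : ∀ t ∈ Set.Icc 0 T, (A t).det ≠ 0)
    (z₀ : n → ℝ) :
    ∃ z : ℝ → n → ℝ,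
      (ContDiffOn ℝ 1 z (Set.Icc 0 T) ∧ z 0 = z₀ ∧
        ∀ t ∈ Set.Icc 0 T,
          (A t).mulVec (derivWithin z (Set.Icc 0 T) t) =
            (B t).mulVec (z t) + c t) ∧
      ∀ z₂ : ℝ → n → ℝ,
        (ContDiffOn ℝ 1 z₂ (Set.Icc 0 T) ∧ z₂ 0 = z₀ ∧
          ∀ t ∈ Set.Icc 0 T,
            (A t).mulVec (derivWithin z₂ (Set.Icc 0 T) t) =
              (B t).mulVec (z₂ t) + c t) →
        Set.EqOn z₂ z (Set.Icc 0 T) := by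
  classical
  have hT' : (0:ℝ) ≤ T := hT.le
  -- the bundled linear map sending a matrix to its `mulVec` CLM
  let Φ : Matrix n n ℝ →ₗ[ℝ] (n → ℝ) →L[ℝ] (n → ℝ) :=
    { toFun := fun M => LinearMap.toContinuousLinearMap M.mulVecLin
      map_add' := fun M N => by ext x; simp [Matrix.add_mulVec]
      map_smul' := fun r M => by ext x; simp [Matrix.smul_mulVec]
    }
  have hΦ : Continuous Φ := Φ.continuous_of_finiteDimensional
  -- projection onto `[0, T]`
  let π : ℝ → Icc (0:ℝ) T := fun t => Set.projIcc 0 T hT' t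
  have hπ : Continuous π := continuous_projIcc
  -- the coefficient data as continuous functions on the subtype
  let M : Icc (0:ℝ) T → Matrix n n ℝ := fun s => (A s)⁻¹ * B s
  let gv : Icc (0:ℝ) T → (n → ℝ) := fun s => (A s)⁻¹.mulVec (c s)
  have hAr : Continuous fun s : Icc (0:ℝ) T => A s := hA.restrict
  have hBr : Continuous fun s : Icc (0:ℝ) T => B s := hB.restrict
  have hcr : Continuous fun s : Icc (0:ℝ) T => c s := hc.restrict
  have hAinv : Continuous fun s : Icc (0:ℝ) T => (A s)⁻¹ := by
    have h1 : Continuous fun s : Icc (0:ℝ) T => ((A s).det)⁻¹ • (A s).adjugate :=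
      (hAr.matrix_det.inv₀ fun s => hdet s s.2).smul hAr.matrix_adjugate
    simpa only [Matrix.inv_def, Ring.inverse_eq_inv'] using h1
  have hM : Continuous M := hAinv.matrix_mul hBr
  have hgv : Continuous gv := hAinv.matrix_mulVec hcr
  -- the vector field
  let Fc : ℝ → (n → ℝ) →L[ℝ] (n → ℝ) := fun t => Φ (M (π t))
  let gc : ℝ → (n → ℝ) := fun t => gv (π t)
  let v : ℝ → (n → ℝ) → (n → ℝ) := fun t x => Fc t x + gc t
  have hFc : Continuous Fc := hΦ.comp (hM.comp hπ)
  have hgc : Continuous gc := hgv.comp hπ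
  -- on `[0,T]`, the vector field is given by the original coefficients
  have hveq : ∀ t ∈ Icc (0:ℝ) T, ∀ x, v t x = ((A t)⁻¹ * B t).mulVec x + (A t)⁻¹.mulVec (c t) := by
    intro t ht x
    simp only [v, Fc, gc, π, Set.projIcc_of_mem hT' ht, M, gv]
    rfl
  -- uniform bounds
  obtain ⟨L0, hL0⟩ := (isCompact_Icc : IsCompact (Icc (0:ℝ) T)).exists_bound_of_continuousOn
    hFc.continuousOn
  obtain ⟨K0, hK0⟩ := (isCompact_Icc : IsCompact (Icc (0:ℝ) T)).exists_bound_of_continuousOn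
    hgc.continuousOn
  set L : ℝ := max L0 0 with hLdef
  set Kg : ℝ := max K0 0 with hKdef
  have hLnn : 0 ≤ L := le_max_right _ _
  have hKnn : 0 ≤ Kg := le_max_right _ _
  have hπfix : ∀ t : ℝ, π ((π t : Icc (0:ℝ) T) : ℝ) = π t := fun t => Set.projIcc_val hT' _
  have hL : ∀ t : ℝ, ‖Fc t‖ ≤ L := by
    intro t
    have h1 : Fc t = Fc ((π t : Icc (0:ℝ) T) : ℝ) := by simp only [Fc, hπfix]
    rw [h1]
    exact le_trans (hL0 _ (π t).2) (le_max_left _ _)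
  have hKg : ∀ t : ℝ, ‖gc t‖ ≤ Kg := by
    intro t
    have h1 : gc t = gc ((π t : Icc (0:ℝ) T) : ℝ) := by simp only [gc, hπfix]
    rw [h1]
    exact le_trans (hK0 _ (π t).2) (le_max_left _ _)
  -- global Lipschitz bound
  have hlip : ∀ t : ℝ, LipschitzWith (Real.toNNReal L) (v t) := by
    intro t
    apply LipschitzWith.of_dist_le_mul
    intro x y
    have h1 : dist (v t x) (v t y) = ‖Fc t (x - y)‖ := by
      rw [dist_eq_norm]
      simp only [v, add_sub_add_right_eq_sub, map_sub]
    rw [h1, Real.coe_toNNReal L hLnn, dist_eq_norm]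
    exact le_trans ((Fc t).le_opNorm _) (mul_le_mul_of_nonneg_right (hL t) (norm_nonneg _))
  -- the uniform step size
  set h : ℝ := 1 / (2 * L + Kg + 1) with hhdef
  have hh : 0 < h := by positivity
  have hstep : ∀ (s : ℝ) (x₀ : n → ℝ), ∃ f : ℝ → (n → ℝ), f s = x₀ ∧
      ∀ t ∈ Icc s (s + h), HasDerivWithinAt f (v t (f t)) (Icc s (s + h)) t := by
    intro s x₀
    have hR : (0:ℝ) ≤ ‖x₀‖ + 1 := by positivity
    have hC : (0:ℝ) ≤ L * (2 * ‖x₀‖ + 1) + Kg := add_nonneg (mul_nonneg hLnn (by positivity)) hKnn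
    have hpl : IsPicardLindelof v (tmin := s) (tmax := s + h) ⟨s, ⟨le_refl s, by linarith⟩⟩ x₀
        (‖x₀‖ + 1).toNNReal 0 (L * (2 * ‖x₀‖ + 1) + Kg).toNNReal (Real.toNNReal L) := by
      constructor
      · exact fun t _ => (hlip t).lipschitzOnWith
      · intro x _
        exact ((hFc.clm_apply continuous_const).add hgc).continuousOn
      · intro t _ x hx
        rw [Real.coe_toNNReal _ hR] at hx
        rw [Real.coe_toNNReal _ hC]
        have hxle : ‖x‖ ≤ 2 * ‖x₀‖ + 1 := by
          have := norm_le_norm_add_norm_sub' x x₀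
          have h2 : ‖x - x₀‖ ≤ ‖x₀‖ + 1 := by
            rw [← dist_eq_norm]
            exact Metric.mem_closedBall.mp hx
          calc ‖x‖ ≤ ‖x₀‖ + ‖x - x₀‖ := by
                have := norm_sub_norm_le x x₀
                linarith [norm_sub_norm_le x x₀]
          _ ≤ 2 * ‖x₀‖ + 1 := by linarith
        calc ‖v t x‖ ≤ ‖Fc t x‖ + ‖gc t‖ := norm_add_le _ _
        _ ≤ ‖Fc t‖ * ‖x‖ + Kg := add_le_add ((Fc t).le_opNorm x) (hKg t)
        _ ≤ L * (2 * ‖x₀‖ + 1) + Kg := by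
            have := mul_le_mul (hL t) hxle (norm_nonneg x) hLnn
            linarith
      · rw [NNReal.coe_zero, sub_zero, Real.coe_toNNReal _ hC, Real.coe_toNNReal _ hR]
        show (L * (2 * ‖x₀‖ + 1) + Kg) * max (s + h - s) (s - s) ≤ ‖x₀‖ + 1
        have hmax : max (s + h - s) (s - s) = h := by
          rw [add_sub_cancel_left, sub_self]
          exact max_eq_left hh.le
        rw [hmax]
        have h1 : (2 * L + Kg + 1) * h = 1 := by
          rw [hhdef]
          field_simp
        have hx0 : (0:ℝ) ≤ ‖x₀‖ := norm_nonneg _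
        nlinarith [mul_le_mul_of_nonneg_right
          (show L * (2 * ‖x₀‖ + 1) + Kg ≤ (2 * L + Kg + 1) * (‖x₀‖ + 1) by nlinarith) hh.le]
    exact hpl.exists_eq_forall_mem_Icc_hasDerivWithinAt₀
  -- glue to get a solution on `[0, T]`
  set k : ℕ := ⌈T / h⌉₊ with hkdef
  have hTk : T ≤ ((k + 1 : ℕ) : ℝ) * h := by
    have h1 : T / h ≤ (k : ℝ) := Nat.le_ceil _
    rw [div_le_iff₀ hh] at h1
    push_cast
    nlinarith
  obtain ⟨z, hz0, hz⟩ := ode_glue v h hh z₀ hstep k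
  have hsub : Icc (0:ℝ) T ⊆ Icc 0 ((k + 1 : ℕ) * h) := Icc_subset_Icc le_rfl hTk
  have hzT : ∀ t ∈ Icc (0:ℝ) T, HasDerivWithinAt z (v t (z t)) (Icc 0 T) t :=
    fun t ht => (hz t (hsub ht)).mono hsub
  have hUD : UniqueDiffOn ℝ (Icc (0:ℝ) T) := uniqueDiffOn_Icc hT
  have hderiv : ∀ t ∈ Icc (0:ℝ) T, derivWithin z (Icc 0 T) t = v t (z t) :=
    fun t ht => (hzT t ht).derivWithin (hUD t ht)
  have hzc : ContinuousOn z (Icc (0:ℝ) T) :=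
    fun t ht => (hzT t ht).continuousWithinAt
  -- the equation
  have hDAE : ∀ (w : ℝ → n → ℝ), (∀ t ∈ Icc (0:ℝ) T, HasDerivWithinAt w (v t (w t)) (Icc 0 T) t) →
      ∀ t ∈ Icc (0:ℝ) T,
        (A t).mulVec (derivWithin w (Set.Icc 0 T) t) = (B t).mulVec (w t) + c t := by
    intro w hw t ht
    have hinv : A t * (A t)⁻¹ = 1 := Matrix.mul_nonsing_inv _ (isUnit_iff_ne_zero.mpr (hdet t ht))
    rw [(hw t ht).derivWithin (hUD t ht), hveq t ht]
    rw [Matrix.mulVec_add, Matrix.mulVec_mulVec, Matrix.mulVec_mulVec, ← Matrix.mul_assoc,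
      hinv, Matrix.one_mul, Matrix.one_mulVec]
  -- C¹ regularity
  have hC1 : ∀ (w : ℝ → n → ℝ), (∀ t ∈ Icc (0:ℝ) T, HasDerivWithinAt w (v t (w t)) (Icc 0 T) t) →
      ContDiffOn ℝ 1 w (Set.Icc 0 T) := by
    intro w hw
    have hwc : ContinuousOn w (Icc (0:ℝ) T) := fun t ht => (hw t ht).continuousWithinAt
    have hdiff : DifferentiableOn ℝ w (Icc (0:ℝ) T) :=
      fun t ht => (hw t ht).differentiableWithinAt
    have hcd : ContinuousOn (fun t => v t (w t)) (Icc (0:ℝ) T) :=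
      (hFc.continuousOn.clm_apply hwc).add hgc.continuousOn
    have h01 : (1 : WithTop ℕ∞) = (0 : WithTop ℕ∞) + 1 := by norm_num
    rw [h01, contDiffOn_succ_iff_derivWithin hUD]
    refine ⟨hdiff, by simp, ?_⟩
    rw [contDiffOn_zero]
    exact hcd.congr fun t ht => (hw t ht).derivWithin (hUD t ht)
  refine ⟨z, ⟨hC1 z hzT, hz0, hDAE z hzT⟩, ?_⟩
  -- uniqueness
  intro z₂ ⟨hz₂c, hz₂0, hz₂eq⟩
  have hz₂d : ∀ t ∈ Icc (0:ℝ) T, HasDerivWithinAt z₂ (v t (z₂ t)) (Icc 0 T) t := by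
    intro t ht
    have hd := ((hz₂c.differentiableOn one_ne_zero) t ht).hasDerivWithinAt
    have hinv : (A t)⁻¹ * A t = 1 := Matrix.nonsing_inv_mul _ (isUnit_iff_ne_zero.mpr (hdet t ht))
    have heq : derivWithin z₂ (Icc 0 T) t = v t (z₂ t) := by
      calc derivWithin z₂ (Icc 0 T) t
          = ((A t)⁻¹ * A t).mulVec (derivWithin z₂ (Icc 0 T) t) := by
            rw [hinv, Matrix.one_mulVec]
        _ = (A t)⁻¹.mulVec ((A t).mulVec (derivWithin z₂ (Icc 0 T) t)) :=
            (Matrix.mulVec_mulVec _ _ _).symm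
        _ = (A t)⁻¹.mulVec ((B t).mulVec (z₂ t) + c t) := by rw [hz₂eq t ht]
        _ = v t (z₂ t) := by
            rw [hveq t ht, Matrix.mulVec_add, Matrix.mulVec_mulVec]
    rw [← heq]
    exact hd
  have hz₂cont : ContinuousOn z₂ (Icc (0:ℝ) T) := hz₂c.continuousOn
  have key : ∀ (f g : ℝ → n → ℝ), (∀ t ∈ Icc (0:ℝ) T, HasDerivWithinAt f (v t (f t)) (Icc 0 T) t) →
      (∀ t ∈ Icc (0:ℝ) T, HasDerivWithinAt g (v t (g t)) (Icc 0 T) t) →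
      ContinuousOn f (Icc (0:ℝ) T) → ContinuousOn g (Icc (0:ℝ) T) →
      f 0 = g 0 → EqOn f g (Icc (0:ℝ) T) := by
    intro f g hf hg hfc hgc' hfg
    have hmem : ∀ t ∈ Ico (0:ℝ) T, Icc (0:ℝ) T ∈ nhdsWithin t (Ici t) := by
      intro t ht
      have h1 : Icc t T ∈ nhdsWithin t (Ici t) := by
        rw [← Ici_inter_Iic]
        exact Filter.inter_mem self_mem_nhdsWithin
          (mem_nhdsWithin_of_mem_nhds (Iic_mem_nhds ht.2))
      exact Filter.mem_of_superset h1 (Icc_subset_Icc ht.1 le_rfl)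
    refine ODE_solution_unique_of_mem_Icc_right
      (v := v) (s := fun _ => (univ : Set (n → ℝ))) (K := Real.toNNReal L)
      (fun t _ => (hlip t).lipschitzOnWith) hfc
      (fun t ht => (hf t (Ico_subset_Icc_self ht)).mono_of_mem_nhdsWithin (hmem t ht))
      (fun t _ => mem_univ _) hgc'
      (fun t ht => (hg t (Ico_subset_Icc_self ht)).mono_of_mem_nhdsWithin (hmem t ht))
      (fun t _ => mem_univ _) hfg
  exact key z₂ z hz₂d hzT hz₂cont hzc (hz₂0.trans hz0.symm)
end

section
/- Let n be a natural number and F : (Fin n → ℝ) × (Fin n → ℝ) → (Fin n → ℝ) be continuously differentiable (C¹). Suppose there exist u₀, v₀ : Fin n → ℝ with F(u₀, v₀) = 0 and such that the partial Jacobian of F with respect to its second argument at (u₀, v₀), i.e. the linear map v ↦ D F(u₀,v₀)(0, v) from ℝⁿ to ℝⁿ, is a linear isomorphism. Then there exist open sets U, V ⊆ (Fin n → ℝ) containing u₀ and v₀ respectively, and ε > 0, such that the initial value problem u(0) = u₀, u'(0) = v₀, F(u(t), u'(t)) = 0 for all t ∈ (-ε, ε), admits a solution u of class C² on (-ε, ε)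 with u(t) ∈ U and u'(t) ∈ V for all t ∈ (-ε, ε); moreover this solution is unique among C¹ functions taking values in U with derivative in V that satisfy the same conditions. -/
open Set

lemma implicit_fn_aux
    (n : ℕ) (F : (Fin n → ℝ) × (Fin n → ℝ) → (Fin n → ℝ))
    (hF : ContDiff ℝ 1 F)
    (u₀ v₀ : Fin n → ℝ) (hF0 : F (u₀, v₀) = 0)
    (hJac : Function.Bijective (fun v : Fin n → ℝ => fderiv ℝ F (u₀, v₀) (0, v))) :
    ∃ (g : (Fin n → ℝ) → (Fin n → ℝ)) (U₁ V₁ : Set (Fin n → ℝ)),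
      IsOpen U₁ ∧ IsOpen V₁ ∧ u₀ ∈ U₁ ∧ v₀ ∈ V₁ ∧ g u₀ = v₀ ∧
      ContDiffAt ℝ 1 g u₀ ∧ (∀ u ∈ U₁, F (u, g u) = 0) ∧
      (∀ u ∈ U₁, ∀ v ∈ V₁, F (u, v) = 0 → v = g u) := by
  set A := fderiv ℝ F (u₀, v₀) with hA
  have hFd : HasFDerivAt F A (u₀, v₀) :=
    ((hF.differentiable one_ne_zero) (u₀, v₀)).hasFDerivAt
  set Φ : ((Fin n → ℝ) × (Fin n → ℝ)) → ((Fin n → ℝ) × (Fin n → ℝ)) :=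
    fun p => (p.1, F p) with hΦdef
  have hΦ : ContDiffAt ℝ 1 Φ (u₀, v₀) := (contDiff_fst.prodMk hF).contDiffAt
  set Φ' : ((Fin n → ℝ) × (Fin n → ℝ)) →L[ℝ] ((Fin n → ℝ) × (Fin n → ℝ)) :=
    (ContinuousLinearMap.fst ℝ _ _).prod A with hΦ'
  have hΦ'd : HasFDerivAt Φ Φ' (u₀, v₀) := (hasFDerivAt_fst).prodMk hFd
  have hbij : Function.Bijective Φ' := by
    constructor
    · intro p q h
      have h1 : p.1 = q.1 := by
        have := congrArg Prod.fst h
        simpa [hΦ'] using this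
      have h2 : A p = A q := by
        have := congrArg Prod.snd h
        simpa [hΦ'] using this
      have hpq : p - q = ((0 : Fin n → ℝ), p.2 - q.2) := by
        rw [Prod.sub_def, h1]
        simp
      have h3 : A (0, p.2 - q.2) = A (0, 0) := by
        rw [← hpq, map_sub, h2, sub_self]
        simp [← Prod.zero_eq_mk]
      have h4 : p.2 - q.2 = 0 := by
        have := hJac.1 h3
        simpa using this
      have h5 : p.2 = q.2 := sub_eq_zero.mp h4
      exact Prod.ext h1 h5
    · rintro ⟨a, b⟩
      obtain ⟨y, hy⟩ := hJac.2 (b - A (a, 0))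
      refine ⟨(a, y), Prod.ext rfl ?_⟩
      have : ((a, y) : (Fin n → ℝ) × (Fin n → ℝ)) = (a, 0) + (0, y) := by
        ext <;> simp
      simp only [hΦ', ContinuousLinearMap.prod_apply]
      rw [this, map_add]
      have hy' : A (0, y) = b - A (a, 0) := hy
      rw [hy']
      abel
  let e : ((Fin n → ℝ) × (Fin n → ℝ)) ≃L[ℝ] ((Fin n → ℝ) × (Fin n → ℝ)) :=
    (LinearEquiv.ofBijective Φ'.toLinearMap hbij).toContinuousLinearEquiv
  have he : (e : ((Fin n → ℝ) × (Fin n → ℝ)) →L[ℝ] ((Fin n → ℝ) × (Fin n → ℝ))) = Φ' := by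
    ext : 1 <;> rfl
  have hΦ'e : HasFDerivAt Φ
      (e : ((Fin n → ℝ) × (Fin n → ℝ)) →L[ℝ] ((Fin n → ℝ) × (Fin n → ℝ))) (u₀, v₀) := by
    rw [he]; exact hΦ'd
  set Ψ := hΦ.toOpenPartialHomeomorph Φ hΦ'e one_ne_zero with hΨ
  have hΨcoe : (Ψ : ((Fin n → ℝ) × (Fin n → ℝ)) → ((Fin n → ℝ) × (Fin n → ℝ))) = Φ :=
    hΦ.toOpenPartialHomeomorph_coe hΦ'e one_ne_zero
  have hsrc : (u₀, v₀) ∈ Ψ.source := hΦ.mem_toOpenPartialHomeomorph_source hΦ'e one_ne_zero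
  have hΦ0 : Φ (u₀, v₀) = (u₀, 0) := by simp [hΦdef, hF0]
  have htgt : ((u₀, (0 : Fin n → ℝ))) ∈ Ψ.target := by
    have := hΦ.image_mem_toOpenPartialHomeomorph_target hΦ'e one_ne_zero
    rwa [hΦ0] at this
  have hsymm0 : Ψ.symm (u₀, 0) = (u₀, v₀) := by
    rw [← hΦ0, ← hΨcoe]
    exact Ψ.left_inv hsrc
  have hsymmC : ContDiffAt ℝ 1 Ψ.symm (u₀, 0) := by
    apply Ψ.contDiffAt_symm htgt (f₀' := e)
    · rw [hsymm0, hΨcoe]; exact hΦ'e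
    · rw [hsymm0, hΨcoe]; exact hΦ
  set g : (Fin n → ℝ) → (Fin n → ℝ) := fun u => (Ψ.symm (u, 0)).2 with hgdef
  have hg0 : g u₀ = v₀ := by simp [hgdef, hsymm0]
  have hgC : ContDiffAt ℝ 1 g u₀ := by
    have h1 : ContDiffAt ℝ 1 (fun u : Fin n → ℝ => Ψ.symm (u, 0)) u₀ :=
      hsymmC.comp u₀ (contDiffAt_id.prodMk contDiffAt_const)
    exact h1.snd
  -- facts about g on the target set
  have hsolve : ∀ u : Fin n → ℝ, (u, (0 : Fin n → ℝ)) ∈ Ψ.target →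
      (Ψ.symm (u, 0)).1 = u ∧ F (u, g u) = 0 := by
    intro u hu
    have h1 : Φ (Ψ.symm (u, 0)) = (u, 0) := by
      rw [← hΨcoe]; exact Ψ.right_inv hu
    have h2 : (Ψ.symm (u, 0)).1 = u := congrArg Prod.fst h1
    refine ⟨h2, ?_⟩
    have h3 : F (Ψ.symm (u, 0)) = 0 := congrArg Prod.snd h1
    have h4 : ((u, g u) : (Fin n → ℝ) × (Fin n → ℝ)) = Ψ.symm (u, 0) := by
      rw [hgdef]
      exact Prod.ext h2.symm rfl
    rw [h4, h3]
  have huniq : ∀ p ∈ Ψ.source, F p = 0 → p.2 = g p.1 := by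
    intro p hp hFp
    have h1 : Ψ p = (p.1, 0) := by rw [hΨcoe, hΦdef]; simp [hFp]
    have h2 : Ψ.symm (p.1, 0) = p := by rw [← h1]; exact Ψ.left_inv hp
    rw [hgdef]
    simp [h2]
  -- choose product neighborhoods
  obtain ⟨U', V₁, hU'o, hu₀U', hV₁o, hv₀V₁, hUV⟩ :=
    mem_nhds_prod_iff'.mp (Ψ.open_source.mem_nhds hsrc)
  set Tset : Set (Fin n → ℝ) := {u | (u, (0 : Fin n → ℝ)) ∈ Ψ.target} with hTdef
  have hTo : IsOpen Tset :=
    Ψ.open_target.preimage (Continuous.prodMk continuous_id continuous_const)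
  have hu₀T : u₀ ∈ Tset := htgt
  refine ⟨g, U' ∩ Tset, V₁, hU'o.inter hTo, hV₁o, ⟨hu₀U', hu₀T⟩, hv₀V₁, hg0, hgC, ?_, ?_⟩
  · intro u hu
    exact (hsolve u hu.2).2
  · intro u hu v hv hFuv
    exact huniq (u, v) (hUV ⟨hu.1, hv⟩) hFuv

/-- Local solution of an implicit ODE: if `F` is `C¹`, `F (u₀, v₀) = 0` and
the partial Jacobian of `F` with respect to its second argument at `(u₀, v₀)`
is a linear isomorphism, then there are open neighborhoods `U ∋ u₀`, `V ∋ v₀`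
and `ε > 0` such that the initial value problem
`u 0 = u₀`, `u' 0 = v₀`, `F (u t, u' t) = 0` on `(-ε, ε)` has a `C²` solution
staying in `U` with derivative in `V`, unique among such `C¹` solutions. -/
theorem implicit_ode_local_solution
    (n : ℕ) (F : (Fin n → ℝ) × (Fin n → ℝ) → (Fin n → ℝ))
    (hF : ContDiff ℝ 1 F)
    (u₀ v₀ : Fin n → ℝ) (hF0 : F (u₀, v₀) = 0)
    (hJac : Function.Bijective (fun v : Fin n → ℝ => fderiv ℝ F (u₀, v₀) (0, v))) :
    ∃ (U V : Set (Fin n → ℝ)), IsOpen U ∧ IsOpen V ∧ u₀ ∈ U ∧ v₀ ∈ V ∧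
      ∃ ε > 0, ∃ u : ℝ → Fin n → ℝ,
        (ContDiffOn ℝ 2 u (Set.Ioo (-ε) ε) ∧
          u 0 = u₀ ∧ deriv u 0 = v₀ ∧
          (∀ t ∈ Set.Ioo (-ε) ε,
            F (u t, deriv u t) = 0 ∧ u t ∈ U ∧ deriv u t ∈ V)) ∧
        ∀ u₂ : ℝ → Fin n → ℝ,
          ContDiffOn ℝ 1 u₂ (Set.Ioo (-ε) ε) →
          u₂ 0 = u₀ → deriv u₂ 0 = v₀ →
          (∀ t ∈ Set.Ioo (-ε) ε,
            F (u₂ t, deriv u₂ t) = 0 ∧ u₂ t ∈ U ∧ deriv u₂ t ∈ V) →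
          Set.EqOn u₂ u (Set.Ioo (-ε) ε) := by
  obtain ⟨g, U₁, V₁, hU₁o, hV₁o, hu₀U₁, hv₀V₁, hg0, hgC, hgsolve, hguniq⟩ :=
    implicit_fn_aux n F hF u₀ v₀ hF0 hJac
  obtain ⟨K, tlip, htlip, hlip⟩ := hgC.exists_lipschitzOnWith
  obtain ⟨O, hO, hgO⟩ := hgC.contDiffOn le_rfl (by simp)
  set O' := interior (tlip ∩ O) with hO'def
  have hO'o : IsOpen O' := isOpen_interior
  have hu₀O' : u₀ ∈ O' := by
    rw [mem_interior_iff_mem_nhds]; exact Filter.inter_mem htlip hO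
  have hO'O : O' ⊆ O := interior_subset.trans inter_subset_right
  have hO'lip : O' ⊆ tlip := interior_subset.trans inter_subset_left
  have hgO' : ContDiffOn ℝ 1 g O' := hgO.mono hO'O
  have hgcont : ContinuousOn g O' := hgO'.continuousOn
  set U : Set (Fin n → ℝ) := U₁ ∩ (O' ∩ g ⁻¹' V₁) with hUdef
  have hUo : IsOpen U := hU₁o.inter (hgcont.isOpen_inter_preimage hO'o hV₁o)
  have hu₀U : u₀ ∈ U := ⟨hu₀U₁, hu₀O', by simp [Set.mem_preimage, hg0, hv₀V₁]⟩
  have hUsub : U ⊆ U₁ := Set.inter_subset_left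
  have hUO' : U ⊆ O' := fun u hu => hu.2.1
  have hUgV : ∀ u ∈ U, g u ∈ V₁ := fun u hu => hu.2.2
  have hlipU : LipschitzOnWith K g U := hlip.mono fun u hu => hO'lip (hUO' hu)
  -- solve the ODE u' = g u
  obtain ⟨f, hf0, ε₀, hε₀, hfd⟩ := hgC.exists_forall_mem_closedBall_exists_eq_forall_mem_Ioo_hasDerivAt₀ 0
  have h0ε₀ : (0 : ℝ) ∈ Set.Ioo (0 - ε₀) (0 + ε₀) := by
    constructor <;> simp [hε₀]
  have hcont : ContinuousAt f 0 := (hfd 0 h0ε₀).continuousAt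
  have hUnhds : f ⁻¹' U ∈ nhds (0 : ℝ) := hcont.preimage_mem_nhds (hUo.mem_nhds (hf0 ▸ hu₀U))
  obtain ⟨δ, hδ, hball⟩ := Metric.mem_nhds_iff.mp hUnhds
  set ε := min ε₀ δ with hεdef
  have hε : 0 < ε := lt_min hε₀ hδ
  have hmem : ∀ t ∈ Set.Ioo (-ε) ε, f t ∈ U ∧ HasDerivAt f (g (f t)) t := by
    intro t ht
    have ht₀ : t ∈ Set.Ioo (0 - ε₀) (0 + ε₀) := by
      constructor
      · have := ht.1; have : -ε₀ ≤ -ε := neg_le_neg (min_le_left _ _); linarith [ht.1]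
      · have := ht.2; have : ε ≤ ε₀ := min_le_left _ _; linarith [ht.2]
    have htδ : t ∈ Metric.ball (0 : ℝ) δ := by
      rw [Real.ball_eq_Ioo]
      have h1 : ε ≤ δ := min_le_right _ _
      constructor
      · have := ht.1; simp only [zero_sub]; linarith [neg_le_neg h1]
      · have := ht.2; simp only [zero_add]; linarith
    exact ⟨hball htδ, hfd t ht₀⟩
  have hderiv : ∀ t ∈ Set.Ioo (-ε) ε, deriv f t = g (f t) :=
    fun t ht => ((hmem t ht).2).deriv
  have h0mem : (0 : ℝ) ∈ Set.Ioo (-ε) ε := by constructor <;> simp [hε]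
  have hfdiff : DifferentiableOn ℝ f (Set.Ioo (-ε) ε) :=
    fun t ht => ((hmem t ht).2).differentiableAt.differentiableWithinAt
  have hmaps : Set.MapsTo f (Set.Ioo (-ε) ε) U := fun t ht => (hmem t ht).1
  have hmapsO : Set.MapsTo f (Set.Ioo (-ε) ε) O' := hmaps.mono_right hUO'
  have hf1 : ContDiffOn ℝ 1 f (Set.Ioo (-ε) ε) := by
    rw [show (1 : WithTop ℕ∞) = 0 + 1 by norm_num,
      contDiffOn_succ_iff_deriv_of_isOpen isOpen_Ioo]
    refine ⟨hfdiff, by simp, ?_⟩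
    rw [contDiffOn_zero]
    exact ContinuousOn.congr (hgcont.comp hfdiff.continuousOn hmapsO) hderiv
  have hgf1 : ContDiffOn ℝ 1 (fun t => g (f t)) (Set.Ioo (-ε) ε) := hgO'.comp hf1 hmapsO
  have hf2 : ContDiffOn ℝ 2 f (Set.Ioo (-ε) ε) := by
    rw [show (2 : WithTop ℕ∞) = 1 + 1 by norm_num,
      contDiffOn_succ_iff_deriv_of_isOpen isOpen_Ioo]
    exact ⟨hfdiff, by simp, hgf1.congr hderiv⟩
  have hd0 : deriv f 0 = v₀ := by
    rw [hderiv 0 h0mem, hf0, hg0]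
  refine ⟨U, V₁, hUo, hV₁o, hu₀U, hv₀V₁, ε, hε, f, ⟨hf2, hf0, hd0, ?_⟩, ?_⟩
  · intro t ht
    have h1 := hderiv t ht
    have h2 := (hmem t ht).1
    refine ⟨?_, h2, ?_⟩
    · rw [h1]; exact hgsolve _ (hUsub h2)
    · rw [h1]; exact hUgV _ h2
  · intro u₂ hu₂C hu₂0 _ hu₂F
    have key : ∀ t ∈ Set.Ioo (-ε) ε, HasDerivAt u₂ (g (u₂ t)) t ∧ u₂ t ∈ U := by
      intro t ht
      obtain ⟨hFt, hUt, hVt⟩ := hu₂F t ht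
      have hdiff : DifferentiableAt ℝ u₂ t :=
        (hu₂C.differentiableOn one_ne_zero t ht).differentiableAt (isOpen_Ioo.mem_nhds ht)
      have hd : deriv u₂ t = g (u₂ t) := hguniq (u₂ t) (hUsub hUt) (deriv u₂ t) hVt hFt
      exact ⟨hd ▸ hdiff.hasDerivAt, hUt⟩
    exact ODE_solution_unique_of_mem_Ioo (fun _ _ => hlipU) h0mem key
      (fun t ht => ⟨(hmem t ht).2, (hmem t ht).1⟩) (by rw [hu₂0, hf0])
end

section
/- Let n be a natural number, T > 0, and let F : (Fin n → ℝ) × (Fin n → ℝ) → (Fin n → ℝ) be continuously differentiable (C¹). Let x : ℝ → (Fin n → ℝ) be continuously differentiable on [0,T] with F(x(t), x'(t)) = 0 for all t ∈ [0,T], and suppose that for every t ∈ [0,T] the partial Jacobian of F with respect to its second argument at (x(t), x'(t)), i.e. the linear map v ↦ D F(x(t),x'(t))(0, v), is a linear isomorphism of ℝⁿ. Then x is of class C² on [0,T]. -/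
/-- Regularity along a DAE trace (key step of the algebraic ghost axiom): if
`F` is `C¹`, `x` is a `C¹` trace on `[0,T]` with `F (x t, x' t) = 0`, and the
partial Jacobian of `F` with respect to its second argument is a linear
isomorphism at every point `(x t, x' t)`, then `x` is `C²` on `[0,T]`. -/
theorem trace_C2_regularity
    (n : ℕ) (T : ℝ) (hT : 0 < T)
    (F : (Fin n → ℝ) × (Fin n → ℝ) → (Fin n → ℝ))
    (hF : ContDiff ℝ 1 F)
    (x : ℝ → Fin n → ℝ)
    (hx : ContDiffOn ℝ 1 x (Set.Icc 0 T))
    (hFx : ∀ t ∈ Set.Icc 0 T, F (x t, derivWithin x (Set.Icc 0 T) t) = 0)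
    (hJac : ∀ t ∈ Set.Icc 0 T,
      Function.Bijective (fun v : Fin n → ℝ =>
        fderiv ℝ F (x t, derivWithin x (Set.Icc 0 T) t) (0, v))) :
    ContDiffOn ℝ 2 x (Set.Icc 0 T) := by
  set s := Set.Icc (0:ℝ) T with hsdef
  have hsu : UniqueDiffOn ℝ s := uniqueDiffOn_Icc hT
  set x' : ℝ → Fin n → ℝ := derivWithin x s with hx'def
  -- x is differentiable on s and x' is continuous on s
  have hxd : DifferentiableOn ℝ x s := hx.differentiableOn one_ne_zero
  have h1 : ContDiffOn ℝ ((0 : ℕ) + 1) x s := by exact_mod_cast hx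
  have hx'c : ContinuousOn x' s := by
    rw [contDiffOn_succ_iff_derivWithin hsu] at h1
    exact h1.2.2.continuousOn
  -- auxiliary map Φ
  set Φ : (Fin n → ℝ) × (Fin n → ℝ) → (Fin n → ℝ) × (Fin n → ℝ) :=
    fun p => (p.1, F p) with hΦdef
  have hΦ : ContDiff ℝ 1 Φ := contDiff_fst.prodMk hF
  -- main step: x' is C¹ within s at every point of s
  have key : ∀ t₀ ∈ s, ContDiffWithinAt ℝ 1 x' s t₀ := by
    intro t₀ ht₀
    set p₀ : (Fin n → ℝ) × (Fin n → ℝ) := (x t₀, x' t₀) with hp₀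
    have hA : HasStrictFDerivAt F (fderiv ℝ F p₀) p₀ :=
      hF.contDiffAt.hasStrictFDerivAt one_ne_zero
    have hJ := hJac t₀ ht₀
    set A := fderiv ℝ F p₀ with hAdef
    set Φ' : (Fin n → ℝ) × (Fin n → ℝ) →L[ℝ] (Fin n → ℝ) × (Fin n → ℝ) :=
      (ContinuousLinearMap.fst ℝ _ _).prod A with hΦ'def
    have hbij : Function.Bijective Φ' := by
      constructor
      · rintro ⟨u, v⟩ ⟨u', v'⟩ h
        have h1 : u = u' := congrArg Prod.fst h
        have h2 : A (u, v) = A (u', v') := congrArg Prod.snd h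
        subst h1
        have hvv : A (0, v) = A (0, v') := by
          have e1 : ((u, v) : (Fin n → ℝ) × (Fin n → ℝ)) = (u, 0) + (0, v) := by simp
          have e2 : ((u, v') : (Fin n → ℝ) × (Fin n → ℝ)) = (u, 0) + (0, v') := by simp
          rw [e1, e2, map_add, map_add] at h2
          exact add_left_cancel h2
        have : v = v' := hJ.injective hvv
        simp [this]
      · rintro ⟨u, w⟩
        obtain ⟨v, hv⟩ := hJ.surjective (w - A (u, 0))
        refine ⟨(u, v), ?_⟩
        have hv' : A (0, v) = w - A (u, 0) := hv
        have hsplit : A (u, v) = A (u, 0) + A (0, v) := by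
          rw [← map_add]; simp
        simp only [hΦ'def, ContinuousLinearMap.prod_apply,
          ContinuousLinearMap.coe_fst', hsplit, hv']
        simp
    set e : ((Fin n → ℝ) × (Fin n → ℝ)) ≃L[ℝ] ((Fin n → ℝ) × (Fin n → ℝ)) :=
      (LinearEquiv.ofBijective (Φ' : ((Fin n → ℝ) × (Fin n → ℝ)) →ₗ[ℝ]
        ((Fin n → ℝ) × (Fin n → ℝ))) hbij).toContinuousLinearEquiv with hedef
    have hecoe : (e : ((Fin n → ℝ) × (Fin n → ℝ)) →L[ℝ]
        ((Fin n → ℝ) × (Fin n → ℝ))) = Φ' := by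
      ext p <;> rfl
    have hΦderiv : HasFDerivAt Φ (e : ((Fin n → ℝ) × (Fin n → ℝ)) →L[ℝ]
        ((Fin n → ℝ) × (Fin n → ℝ))) p₀ := by
      rw [hecoe]
      exact (hasFDerivAt_fst).prodMk hA.hasFDerivAt
    have hΦat : ContDiffAt ℝ 1 Φ p₀ := hΦ.contDiffAt
    -- local inverse
    set g : (Fin n → ℝ) × (Fin n → ℝ) → (Fin n → ℝ) × (Fin n → ℝ) :=
      hΦat.localInverse hΦderiv one_ne_zero with hgdef
    have hg : ContDiffAt ℝ 1 g (Φ p₀) := hΦat.to_localInverse hΦderiv one_ne_zero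
    have hleft : ∀ᶠ p in nhds p₀, g (Φ p) = p :=
      (hΦat.hasStrictFDerivAt' hΦderiv one_ne_zero).eventually_left_inverse
    -- ψ : implicit function
    set ψ : (Fin n → ℝ) → (Fin n → ℝ) := fun a => (g (a, 0)).2 with hψdef
    have hFp₀ : F p₀ = 0 := hFx t₀ ht₀
    have hΦp₀ : Φ p₀ = (x t₀, 0) := by simp [hΦdef, hFp₀, hp₀, hFx t₀ ht₀]
    have hψat : ContDiffAt ℝ 1 ψ (x t₀) := by
      have h1 : ContDiffAt ℝ 1
          (fun a : Fin n → ℝ => ((a, 0) : (Fin n → ℝ) × (Fin n → ℝ))) (x t₀) :=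
        (contDiff_id.prodMk contDiff_const).contDiffAt
      have h2 : ContDiffAt ℝ 1 g ((x t₀, 0) : (Fin n → ℝ) × (Fin n → ℝ)) := by
        rwa [hΦp₀] at hg
      exact (h2.comp (x t₀) h1).snd
    -- x' agrees with ψ ∘ x near t₀ within s
    have hxc : ContinuousWithinAt x s t₀ := hx.continuousOn.continuousWithinAt ht₀
    have hcurve : ContinuousWithinAt (fun t => ((x t, x' t) :
        (Fin n → ℝ) × (Fin n → ℝ))) s t₀ :=
      hxc.prodMk (hx'c.continuousWithinAt ht₀)
    have hev : ∀ᶠ t₁ in nhdsWithin t₀ s, g (Φ (x t₁, x' t₁)) = (x t₁, x' t₁) :=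
      hcurve hleft
    have heq : ∀ᶠ t₁ in nhdsWithin t₀ s, x' t₁ = ψ (x t₁) := by
      filter_upwards [hev, eventually_mem_nhdsWithin] with t₁ h₁ ht₁
      have hF₁ : F (x t₁, x' t₁) = 0 := hFx t₁ ht₁
      have hΦt : Φ (x t₁, x' t₁) = (x t₁, 0) := by simp [hΦdef, hF₁]
      rw [hΦt] at h₁
      simp only [hψdef]
      rw [h₁]
    have hcomp : ContDiffWithinAt ℝ 1 (fun t => ψ (x t)) s t₀ :=
      hψat.comp_contDiffWithinAt _ (hx.contDiffWithinAt ht₀)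
    refine hcomp.congr_of_eventuallyEq heq ?_
    have h₀ := hev.self_of_nhdsWithin ht₀
    have hΦt : Φ (x t₀, x' t₀) = (x t₀, 0) := by simp [hΦdef, hFx t₀ ht₀]
    rw [hΦt] at h₀
    simp only [hψdef]
    rw [h₀]
  -- conclude
  have h2 : ContDiffOn ℝ ((1 : ℕ) + 1) x s := by
    rw [contDiffOn_succ_iff_derivWithin hsu]
    exact ⟨hxd, by simp, key⟩
  exact_mod_cast h2
end

section
/- Let T > 0 and let x, y, z : ℝ → ℝ be continuously differentiable on [0,T] satisfying, for all t ∈ [0,T]: x'(t) = -y(t), x(t)·y(t) = 1, and z'(t) = -(y(t))²·z(t)/2, with initial conditions x(0) = 1, y(0) = 1, z(0) = 1. Then z(t)²·y(t) = 1 for all t ∈ [0,T]; in particular y(t) > 0 for all t ∈ [0,T]. -/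
/-- Safety property of Example 1: along any `C¹` trace of the augmented system
`x' = -y ∧ x·y = 1 ∧ z' = -y²·z/2` started at `x = y = z = 1`, the quantity
`z²·y` is a differential invariant equal to `1`; in particular `y > 0`. -/
theorem example_safety
    (T : ℝ) (hT : 0 < T)
    (x y z : ℝ → ℝ)
    (hx : ContDiffOn ℝ 1 x (Set.Icc 0 T))
    (hy : ContDiffOn ℝ 1 y (Set.Icc 0 T))
    (hz : ContDiffOn ℝ 1 z (Set.Icc 0 T))
    (hx' : ∀ t ∈ Set.Icc 0 T, derivWithin x (Set.Icc 0 T) t = -y t)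
    (hxy : ∀ t ∈ Set.Icc 0 T, x t * y t = 1)
    (hz' : ∀ t ∈ Set.Icc 0 T,
      derivWithin z (Set.Icc 0 T) t = -(y t) ^ 2 * z t / 2)
    (hx0 : x 0 = 1) (hy0 : y 0 = 1) (hz0 : z 0 = 1) :
    (∀ t ∈ Set.Icc 0 T, z t ^ 2 * y t = 1) ∧
    (∀ t ∈ Set.Icc 0 T, 0 < y t) := by
  have hud : UniqueDiffOn ℝ (Set.Icc 0 T) := uniqueDiffOn_Icc hT
  have hxd := hx.differentiableOn one_ne_zero
  have hyd := hy.differentiableOn one_ne_zero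
  have hzd := hz.differentiableOn one_ne_zero
  -- y' = y^3
  have hy' : ∀ t ∈ Set.Icc 0 T, derivWithin y (Set.Icc 0 T) t = y t ^ 3 := by
    intro t ht
    have hX : HasDerivWithinAt x (-y t) (Set.Icc 0 T) t := by
      have := (hxd t ht).hasDerivWithinAt
      rwa [hx' t ht] at this
    have hY : HasDerivWithinAt y (derivWithin y (Set.Icc 0 T) t) (Set.Icc 0 T) t :=
      (hyd t ht).hasDerivWithinAt
    have hprod : HasDerivWithinAt (fun s => x s * y s)
        (-y t * y t + x t * derivWithin y (Set.Icc 0 T) t) (Set.Icc 0 T) t := hX.mul hY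
    have hconst : HasDerivWithinAt (fun s => x s * y s) 0 (Set.Icc 0 T) t := by
      have : HasDerivWithinAt (fun _ : ℝ => (1:ℝ)) 0 (Set.Icc 0 T) t :=
        (hasDerivWithinAt_const _ _ _)
      exact this.congr (fun s hs => hxy s hs) (hxy t ht)
    have heq : -y t * y t + x t * derivWithin y (Set.Icc 0 T) t = 0 := by
      have := hprod.derivWithin (hud t ht)
      have h2 := hconst.derivWithin (hud t ht)
      rw [← this, h2]
    have hxy' := hxy t ht
    have hxd' : x t * derivWithin y (Set.Icc 0 T) t = y t * y t := by linarith
    have h1 : derivWithin y (Set.Icc 0 T) t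
        = (x t * y t) * derivWithin y (Set.Icc 0 T) t := by rw [hxy']; ring
    rw [h1]
    linear_combination y t * hxd'
  -- g = z^2 * y is constant
  have hzero : ∀ t ∈ Set.Icc 0 T, z t ^ 2 * y t = 1 := by
    have hgd : DifferentiableOn ℝ (fun s => z s ^ 2 * y s) (Set.Icc 0 T) :=
      ((hzd.pow 2).mul hyd)
    have hg' : ∀ t ∈ Set.Icc 0 T,
        derivWithin (fun s => z s ^ 2 * y s) (Set.Icc 0 T) t = 0 := by
      intro t ht
      have hZ : HasDerivWithinAt z (-(y t) ^ 2 * z t / 2) (Set.Icc 0 T) t := by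
        have := (hzd t ht).hasDerivWithinAt
        rwa [hz' t ht] at this
      have hY : HasDerivWithinAt y (y t ^ 3) (Set.Icc 0 T) t := by
        have := (hyd t ht).hasDerivWithinAt
        rwa [hy' t ht] at this
      have hG : HasDerivWithinAt (fun s => z s ^ 2 * y s)
          ((2 * z t ^ 1 * (-(y t) ^ 2 * z t / 2)) * y t + z t ^ 2 * y t ^ 3)
          (Set.Icc 0 T) t := by
        exact (hZ.pow 2).mul hY
      have := hG.derivWithin (hud t ht)
      rw [this]; ring
    intro t ht
    have h0 : (0:ℝ) ∈ Set.Icc 0 T := Set.left_mem_Icc.2 hT.le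
    have hf' : ∀ s ∈ Set.Icc 0 T,
        fderivWithin ℝ (fun s => z s ^ 2 * y s) (Set.Icc 0 T) s = 0 := by
      intro s hs
      have hD : HasDerivWithinAt (fun s => z s ^ 2 * y s) 0 (Set.Icc 0 T) s := by
        have := (hgd s hs).hasDerivWithinAt
        rwa [hg' s hs] at this
      have hF := hD.hasFDerivWithinAt
      have := hF.fderivWithin (hud s hs)
      rw [this]; ext; simp
    have hconst := (convex_Icc (0:ℝ) T).is_const_of_fderivWithin_eq_zero hgd hf' ht h0
    simpa [hz0, hy0] using hconst
  refine ⟨hzero, fun t ht => ?_⟩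
  have h := hzero t ht
  nlinarith [sq_nonneg (z t), h]
end
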